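/- arXiv:1502.06543 — 4 statements merged into one kernel-verified Lean document; each statement's English description precedes it below -/
import Mathlib

section
/- Let q > 1 be a real number, let m ≥ 1 and k > m be integers with k − m even, set n := (k − m)/2, and let ω be a complex number with |ω| = 1. Then the product ∏_{i=1}^{n} ( ([i]_q · [m+i]_q) / ([m+2i]_q · [m+2i−1]_q) ) · ( q^{m+2i} + q^{−(m+2i)} − ω² − ω^{−2} ) is a strictly positive real number. -/
/-- The quantum integer `[n]_q = (q^n - q^{-n})/(q - q^{-1})`. -/
noncomputable def qint (q : ℝ) (n : ℕ) : ℝ :=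
  (q ^ (n : ℤ) - q ^ (-(n : ℤ))) / (q - q⁻¹)

lemma qint_pos {q : ℝ} (hq : 1 < q) {n : ℕ} (hn : 1 ≤ n) : 0 < qint q n := by
  have hq0 : 0 < q := lt_trans one_pos hq
  apply div_pos
  · have hlt : (-(n:ℤ)) < (n:ℤ) := by
      have : (1:ℤ) ≤ (n:ℤ) := by exact_mod_cast hn
      omega
    have := zpow_lt_zpow_right₀ hq hlt
    linarith
  · have : q⁻¹ < 1 := inv_lt_one_of_one_lt₀ hq
    linarith

theorem lowest_weight_m_coefficient_pos (q : ℝ) (hq : 1 < q)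
    (m k : ℕ) (hm : 1 ≤ m) (hk : m < k) (he : Even (k - m))
    (ω : ℂ) (hω : ‖ω‖ = 1) :
    ∃ r : ℝ, 0 < r ∧
      (∏ i ∈ Finset.Icc 1 ((k - m) / 2),
          (((qint q i * qint q (m + i)) /
              (qint q (m + 2 * i) * qint q (m + 2 * i - 1)) : ℝ) : ℂ) *
            ((q : ℂ) ^ ((m + 2 * i : ℕ) : ℤ) + (q : ℂ) ^ (-((m + 2 * i : ℕ) : ℤ))
              - ω ^ 2 - ω ^ (-2 : ℤ))) = (r : ℂ) := by
  have hq0 : 0 < q := lt_trans one_pos hq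
  -- conj fact
  have hz : ω ^ 2 + ω ^ (-2 : ℤ) = 2 * ((ω ^ 2).re : ℂ) := by
    have habs : ‖ω ^ 2‖ = 1 := by rw [norm_pow, hω, one_pow]
    have hinv : (ω ^ 2)⁻¹ = (starRingEnd ℂ) (ω ^ 2) := by
      rw [Complex.inv_def, Complex.normSq_eq_norm_sq, habs]
      simp
    have : ω ^ (-2 : ℤ) = (ω ^ 2)⁻¹ := by
      rw [zpow_neg]; norm_cast
    rw [this, hinv, Complex.add_conj]
    push_cast
    ring
  refine ⟨∏ i ∈ Finset.Icc 1 ((k - m) / 2),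
    (qint q i * qint q (m + i)) / (qint q (m + 2*i) * qint q (m + 2*i - 1)) *
      (q ^ ((m + 2*i : ℕ) : ℤ) + q ^ (-((m + 2*i : ℕ) : ℤ)) - 2 * (ω^2).re), ?_, ?_⟩
  · apply Finset.prod_pos
    intro i hi
    have hi1 : 1 ≤ i := (Finset.mem_Icc.mp hi).1
    apply mul_pos
    · apply div_pos
      · exact mul_pos (qint_pos hq hi1) (qint_pos hq (by omega))
      · exact mul_pos (qint_pos hq (by omega)) (qint_pos hq (by omega))
    · set x := q ^ ((m + 2*i : ℕ) : ℤ) with hx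
      have hx1 : 1 < x := by
        apply one_lt_zpow₀ hq
        have : 1 ≤ m + 2*i := by omega
        exact_mod_cast this
      have hxinv : q ^ (-((m + 2*i : ℕ) : ℤ)) = x⁻¹ := by rw [zpow_neg]
      have hxi : x * x⁻¹ = 1 := mul_inv_cancel₀ (by linarith)
      have hre : |(ω^2).re| ≤ 1 := by
        have := Complex.abs_re_le_norm (ω^2)
        rw [norm_pow, hω, one_pow] at this
        exact this
      have hre1 : (ω^2).re ≤ 1 := le_trans (le_abs_self _) hre
      have hxinv0 : 0 < x⁻¹ := inv_pos.2 (by linarith)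
      rw [hxinv]
      nlinarith [mul_pos (sub_pos.2 hx1) (sub_pos.2 (inv_lt_one_of_one_lt₀ hx1))]
  · rw [Complex.ofReal_prod]
    apply Finset.prod_congr rfl
    intro i _
    have : (q : ℂ) ^ ((m + 2 * i : ℕ) : ℤ) + (q : ℂ) ^ (-((m + 2 * i : ℕ) : ℤ))
        - ω ^ 2 - ω ^ (-2 : ℤ)
        = (q : ℂ) ^ ((m + 2 * i : ℕ) : ℤ) + (q : ℂ) ^ (-((m + 2 * i : ℕ) : ℤ))
          - 2 * ((ω ^ 2).re : ℂ) := by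
      rw [← hz]; ring
    rw [this]
    push_cast
    ring
end

section
/- Let G be a group and g ∈ G. The ℂ-linear map from the group algebra ℂ[Z_G(g)] of the centralizer Z_G(g) = {z ∈ G : zg = gz} to the algebra D determined on group elements by z ↦ e_{(g,z)} is an injective ℂ-algebra homomorphism (sending the identity of ℂ[Z_G(g)] to the idempotent e_{(g,1)}), and its image equals the corner e_{(g,1)} · D · e_{(g,1)}. -/
/-- The tube algebra of `G`-Vec: a (non-unital) ℂ-algebra `D` with a basis
`e_{(g,z)}` indexed by `G × G` and multiplication
`e_{(h,w)} · e_{(g,z)} = e_{(g,wz)}` if `h = zgz⁻¹` and `0` otherwise.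
The ℂ-linear map from the group algebra of the centralizer of `g` determined by
`z ↦ e_{(g,z)}` is an injective algebra homomorphism onto the corner
`e_{(g,1)} · D · e_{(g,1)}`. -/
theorem tube_algebra_centralizer_corner {G : Type*} [Group G] [DecidableEq G]
    {D : Type*} [NonUnitalRing D] [Module ℂ D]
    [SMulCommClass ℂ D D] [IsScalarTower ℂ D D]
    (e : Module.Basis (G × G) ℂ D)
    (hmul : ∀ h w g z : G,
      e (h, w) * e (g, z) = if h = z * g * z⁻¹ then e (g, w * z) else 0)
    (g : G)
    (φ : MonoidAlgebra ℂ ↥(Subgroup.centralizer ({g} : Set G)) →ₗ[ℂ] D)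
    (hφ : ∀ z : ↥(Subgroup.centralizer ({g} : Set G)),
      φ (MonoidAlgebra.single z (1 : ℂ)) = e (g, (z : G))) :
    (∀ x y, φ (x * y) = φ x * φ y) ∧ Function.Injective φ ∧
      φ 1 = e (g, 1) ∧
      Set.range φ = Set.range (fun y : D => e (g, 1) * y * e (g, 1)) := by
  have hZ : Subgroup.centralizer ({g} : Set G) = Subgroup.centralizer ({g} : Set G) := rfl
  have hc : ∀ z : ↥(Subgroup.centralizer ({g} : Set G)), (z : G) * g * (z : G)⁻¹ = g := by
    intro z
    have h := Subgroup.mem_centralizer_iff.mp z.2 g (Set.mem_singleton g)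
    rw [← h]
    group
  have hsingle : ∀ (z : ↥(Subgroup.centralizer ({g} : Set G))) (a : ℂ), φ (MonoidAlgebra.single z a) = a • e (g, (z : G)) := by
    intro z a
    have : (MonoidAlgebra.single z a : MonoidAlgebra ℂ ↥(Subgroup.centralizer ({g} : Set G))) = a • MonoidAlgebra.single z (1 : ℂ) := by
      rw [MonoidAlgebra.smul_single, smul_eq_mul, mul_one]
    rw [this, map_smul, hφ]
  -- e (g, z) * e (g, w) = e (g, z * w) for w in the centralizer
  have hee : ∀ (z w : ↥(Subgroup.centralizer ({g} : Set G))), e (g, (z : G)) * e (g, (w : G)) = e (g, ((z * w : ↥(Subgroup.centralizer ({g} : Set G))) : G)) := by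
    intro z w
    rw [hmul, hc w, if_pos rfl]
    rfl
  have hmulφ : ∀ x y, φ (x * y) = φ x * φ y := by
    intro x y
    induction x using MonoidAlgebra.induction_linear with
    | zero => simp
    | add p q hp hq => simp only [add_mul, map_add, hp, hq]
    | single z a =>
      induction y using MonoidAlgebra.induction_linear with
      | zero => simp
      | add p q hp hq => simp only [mul_add, map_add, hp, hq]
      | single w b =>
        rw [MonoidAlgebra.single_mul_single, hsingle, hsingle, hsingle,
          smul_mul_smul_comm, hee]
  have hv : φ = Finsupp.linearCombination ℂ (fun z : ↥(Subgroup.centralizer ({g} : Set G)) => e (g, (z : G))) ∘ₗ (MonoidAlgebra.coeffLinearEquiv ℂ).toLinearMap := by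
    apply MonoidAlgebra.lhom_ext'
    intro z
    apply LinearMap.ext_ring
    show φ (MonoidAlgebra.single z 1) = Finsupp.linearCombination ℂ (fun z : ↥(Subgroup.centralizer ({g} : Set G)) => e (g, (z : G))) (Finsupp.single z (1 : ℂ))
    rw [Finsupp.linearCombination_single, one_smul]
    exact hφ z
  have hli : LinearIndependent ℂ (fun z : ↥(Subgroup.centralizer ({g} : Set G)) => e (g, (z : G))) := by
    apply e.linearIndependent.comp (fun z : ↥(Subgroup.centralizer ({g} : Set G)) => (g, (z : G)))
    intro a b h
    exact Subtype.ext (congrArg Prod.snd h)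
  have hinj : Function.Injective φ := by
    rw [hv]
    rw [LinearMap.coe_comp, LinearEquiv.coe_coe]
    exact Function.Injective.comp (linearIndependent_iff_injective_finsuppLinearCombination.mp hli) (MonoidAlgebra.coeffLinearEquiv ℂ).injective
  refine ⟨hmulφ, hinj, ?_, ?_⟩
  · have : (1 : MonoidAlgebra ℂ ↥(Subgroup.centralizer ({g} : Set G))) = MonoidAlgebra.single 1 (1 : ℂ) := rfl
    rw [this, hφ]
    rfl
  · set L : D →ₗ[ℂ] D :=
      (LinearMap.mulLeft ℂ (e (g, 1))).comp (LinearMap.mulRight ℂ (e (g, 1))) with hL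
    have hLapp : ∀ y : D, L y = e (g, 1) * y * e (g, 1) := by
      intro y
      simp [hL, LinearMap.mulLeft_apply, LinearMap.mulRight_apply, mul_assoc]
    have h1 : (fun y : D => e (g, 1) * y * e (g, 1)) = (L : D → D) := by
      funext y; rw [hLapp]
    rw [h1, ← LinearMap.coe_range φ, ← LinearMap.coe_range L]
    -- range φ = span of e(g,z), z ∈ Z
    rw [hv, LinearMap.range_comp_of_range_eq_top _ (LinearEquiv.range _), Finsupp.range_linearCombination]
    -- range L = map L ⊤ = map L (span (range e)) = span (L '' range e)
    have hrangeL : LinearMap.range L = Submodule.span ℂ (L '' Set.range e) := by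
      rw [LinearMap.range_eq_map, ← e.span_eq, Submodule.map_span]
    rw [hrangeL]
    have hr : ∀ z : G, e (g, z) * e (g, 1) = e (g, z) := by
      intro z
      rw [hmul]
      simp
    have hl : ∀ z : ↥(Subgroup.centralizer ({g} : Set G)),
        e (g, 1) * e (g, (z : G)) = e (g, (z : G)) := by
      intro z
      rw [hmul, hc z, if_pos rfl, one_mul]
    apply le_antisymm
    · apply Submodule.span_le.mpr
      rintro _ ⟨z, rfl⟩
      show e (g, (z : G)) ∈ ↑(Submodule.span ℂ (⇑L '' Set.range ⇑e))
      have hfix : e (g, (z : G)) = L (e (g, (z : G))) := by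
        rw [hLapp, hl z, hr]
      rw [hfix]
      exact Submodule.subset_span ⟨e (g, (z : G)), ⟨(g, (z : G)), rfl⟩, rfl⟩
    · apply Submodule.span_le.mpr
      rintro _ ⟨_, ⟨⟨h, w⟩, rfl⟩, rfl⟩
      rw [hLapp, hmul g 1 h w]
      by_cases hhw : g = w * h * w⁻¹
      · rw [if_pos hhw, one_mul, hmul h w g 1]
        simp only [inv_one, mul_one, one_mul]
        by_cases hh : h = g
        · rw [if_pos hh]
          have hwZ : w ∈ Subgroup.centralizer ({g} : Set G) := by
            rw [Subgroup.mem_centralizer_iff]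
            intro x hx
            rw [Set.mem_singleton_iff] at hx
            rw [hx]
            have hg : g = w * g * w⁻¹ := hh ▸ hhw
            conv_lhs => rw [hg]
            group
          exact Submodule.subset_span ⟨⟨w, hwZ⟩, rfl⟩
        · rw [if_neg hh]
          exact Submodule.zero_mem _
      · rw [if_neg hhw, zero_mul]
        exact Submodule.zero_mem _
end

section
/- Let G be a group and g, h ∈ G. The corner e_{(h,1)} · D · e_{(g,1)} equals the ℂ-linear span of {e_{(g,z)} : z ∈ G, z g z^{−1} = h}. In particular, e_{(h,1)} · D · e_{(g,1)} ≠ 0 if and only if g and h are conjugate in G. -/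
/-- In the tube algebra `D` of `G`-Vec (basis `e_{(g,z)}`, `g, z ∈ G`, with
`e_{(h,w)} · e_{(g,z)} = e_{(g,wz)}` if `h = zgz⁻¹` and `0` otherwise), the
corner `e_{(h,1)} · D · e_{(g,1)}` is the linear span of
`{e_{(g,z)} : z g z⁻¹ = h}`; in particular it is nonzero iff `g` and `h` are
conjugate. -/
theorem tube_algebra_corner_span {G : Type*} [Group G] [DecidableEq G]
    {D : Type*} [NonUnitalRing D] [Module ℂ D]
    [SMulCommClass ℂ D D] [IsScalarTower ℂ D D]
    (e : Module.Basis (G × G) ℂ D)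
    (hmul : ∀ h w g z : G,
      e (h, w) * e (g, z) = if h = z * g * z⁻¹ then e (g, w * z) else 0)
    (g h : G) :
    Set.range (fun y : D => e (h, 1) * y * e (g, 1))
        = (Submodule.span ℂ {x : D | ∃ z : G, z * g * z⁻¹ = h ∧ x = e (g, z)} : Set D)
      ∧ ((∃ y : D, e (h, 1) * y * e (g, 1) ≠ 0) ↔ IsConj g h) := by
  classical
  set S : Set D := {x : D | ∃ z : G, z * g * z⁻¹ = h ∧ x = e (g, z)} with hS
  -- the corner map as a linear map
  set φ : D →ₗ[ℂ] D :=
    (LinearMap.mulLeft ℂ (e (h, 1))).comp (LinearMap.mulRight ℂ (e (g, 1))) with hφ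
  have hφ' : ∀ y : D, φ y = e (h, 1) * y * e (g, 1) := by
    intro y
    simp [hφ, LinearMap.mulLeft_apply, LinearMap.mulRight_apply, mul_assoc]
  have key : ∀ a z : G, e (h, 1) * e (a, z) * e (g, 1)
      = if a = g ∧ z * g * z⁻¹ = h then e (g, z) else 0 := by
    intro a z
    rw [hmul h 1 a z]
    by_cases h1 : h = z * a * z⁻¹
    · rw [if_pos h1, hmul a (1 * z) g 1]
      by_cases h2 : a = g
      · subst h2
        simp only [mul_one, one_mul, inv_one]
        rw [if_pos trivial, if_pos ⟨trivial, h1.symm⟩]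
      · rw [if_neg (by simpa using h2), if_neg (by simp [h2])]
    · rw [if_neg h1, zero_mul]
      by_cases h2 : a = g
      · subst h2
        rw [if_neg (by exact fun hc => h1 hc.2.symm)]
      · rw [if_neg (by simp [h2])]
  -- range of φ equals span S
  have hrange : LinearMap.range φ = Submodule.span ℂ S := by
    have h1 : LinearMap.range φ = Submodule.span ℂ (φ '' Set.range e) := by
      rw [← Submodule.map_top, ← e.span_eq, Submodule.map_span]
    rw [h1]
    apply le_antisymm
    · rw [Submodule.span_le]
      rintro x ⟨y, ⟨⟨a, z⟩, rfl⟩, rfl⟩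
      rw [hφ', key]
      split_ifs with hc
      · exact Submodule.subset_span ⟨z, hc.2, hc.1 ▸ rfl⟩
      · exact Submodule.zero_mem _
    · rw [Submodule.span_le]
      rintro x ⟨z, hz, rfl⟩
      apply Submodule.subset_span
      refine ⟨e (g, z), ⟨(g, z), rfl⟩, ?_⟩
      rw [hφ', key]
      simp [hz]
  have hset : Set.range (fun y : D => e (h, 1) * y * e (g, 1))
      = (Submodule.span ℂ S : Set D) := by
    rw [← hrange]
    ext x
    constructor
    · rintro ⟨y, rfl⟩
      exact ⟨y, (hφ' y).symm ▸ rfl⟩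
    · rintro ⟨y, rfl⟩
      exact ⟨y, (hφ' y).symm⟩
  refine ⟨hset, ?_⟩
  constructor
  · rintro ⟨y, hy⟩
    by_contra hconj
    apply hy
    have hSempty : S = ∅ := by
      ext x
      simp only [hS, Set.mem_setOf_eq, Set.mem_empty_iff_false, iff_false]
      rintro ⟨z, hz, -⟩
      exact hconj (isConj_iff.mpr ⟨z, hz⟩)
    have : e (h, 1) * y * e (g, 1) ∈ Submodule.span ℂ S := by
      rw [← hφ' y, ← hrange]; exact ⟨y, rfl⟩
    rwa [hSempty, Submodule.span_empty, Submodule.mem_bot] at this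
  · rintro hc
    obtain ⟨z, hz⟩ := isConj_iff.mp hc
    refine ⟨e (g, z), ?_⟩
    rw [key g z, if_pos ⟨rfl, hz⟩]
    exact e.ne_zero _
end

section
/- Let G be a group and g ∈ G an element whose conjugacy class Γ = {a ∈ G : a is conjugate to g} is finite. Let D_Γ be the ℂ-linear span of {e_{(a,z)} : a ∈ Γ, z ∈ G} inside D. Then D_Γ is a ℂ-subalgebra of D, and D_Γ is isomorphic as a ℂ-algebra to the algebra of Γ × Γ matrices with entries in the group algebra ℂ[Z_G(g)] of the centralizer Z_G(g) = {z ∈ G : zg = gz}. -/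
noncomputable section TubeAux

variable {G : Type*} [Group G]

/-- Chosen conjugator: `tcaX g a * g * (tcaX g a)⁻¹ = a`. -/
private def tcaX (g : G) (a : {a : G // IsConj g a}) : G :=
  (isConj_iff.mp a.2).choose

private lemma tcaX_spec (g : G) (a : {a : G // IsConj g a}) :
    tcaX g a * g * (tcaX g a)⁻¹ = a.1 :=
  (isConj_iff.mp a.2).choose_spec

private lemma tcaX_conj (g : G) (a : {a : G // IsConj g a}) :
    (tcaX g a)⁻¹ * a.1 * tcaX g a = g := by
  conv_lhs => rw [← tcaX_spec g a]
  group

private lemma conj_memX (g : G) {a : G} (ha : IsConj g a) (z : G) : IsConj g (z * a * z⁻¹) :=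
  ha.trans (isConj_iff.mpr ⟨z, rfl⟩)

private lemma cent_memX (g : G) (z : G) (a b : {a : G // IsConj g a})
    (hb : b.1 = z * a.1 * z⁻¹) :
    (tcaX g b)⁻¹ * z * tcaX g a ∈ Subgroup.centralizer ({g} : Set G) := by
  rw [Subgroup.mem_centralizer_iff]
  intro h hh
  rw [Set.mem_singleton_iff] at hh
  rw [hh]
  have key : ((tcaX g b)⁻¹ * z * tcaX g a) * g * ((tcaX g b)⁻¹ * z * tcaX g a)⁻¹ = g := by
    calc ((tcaX g b)⁻¹ * z * tcaX g a) * g * ((tcaX g b)⁻¹ * z * tcaX g a)⁻¹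
        = (tcaX g b)⁻¹ * (z * (tcaX g a * g * (tcaX g a)⁻¹) * z⁻¹) * tcaX g b := by group
      _ = (tcaX g b)⁻¹ * (z * a.1 * z⁻¹) * tcaX g b := by rw [tcaX_spec g a]
      _ = (tcaX g b)⁻¹ * b.1 * tcaX g b := by rw [hb]
      _ = g := tcaX_conj g b
  have key2 := congrArg (· * ((tcaX g b)⁻¹ * z * tcaX g a)) key
  simpa [mul_assoc] using key2.symm

/-- The index bijection between pairs `(a, z)` with `a` conjugate to `g`, and
triples `((b, a), u)` with `b, a` conjugate to `g` and `u` centralizing `g`. -/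
private def idxEquivX (g : G) :
    {p : G × G // IsConj g p.1} ≃
      (({a : G // IsConj g a} × {a : G // IsConj g a}) × Subgroup.centralizer ({g} : Set G)) where
  toFun p :=
    ((⟨p.1.2 * p.1.1 * p.1.2⁻¹, conj_memX g p.2 p.1.2⟩, ⟨p.1.1, p.2⟩),
      ⟨(tcaX g ⟨p.1.2 * p.1.1 * p.1.2⁻¹, conj_memX g p.2 p.1.2⟩)⁻¹ * p.1.2 * tcaX g ⟨p.1.1, p.2⟩,
        cent_memX g p.1.2 ⟨p.1.1, p.2⟩ _ rfl⟩)
  invFun x := ⟨(x.1.2.1, tcaX g x.1.1 * x.2.1 * (tcaX g x.1.2)⁻¹), x.1.2.2⟩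
  left_inv p := by
    apply Subtype.ext
    obtain ⟨⟨a, z⟩, hp⟩ := p
    refine Prod.ext rfl ?_
    simp only []
    group
  right_inv x := by
    obtain ⟨⟨b, a⟩, u⟩ := x
    have hu : u.1 * g = g * u.1 := (u.2 g (Set.mem_singleton g)).symm
    have hz : (tcaX g b * u.1 * (tcaX g a)⁻¹) * a.1 * (tcaX g b * u.1 * (tcaX g a)⁻¹)⁻¹ = b.1 := by
      have h1 := tcaX_conj g a
      have h2 := tcaX_spec g b
      calc (tcaX g b * u.1 * (tcaX g a)⁻¹) * a.1 * (tcaX g b * u.1 * (tcaX g a)⁻¹)⁻¹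
          = tcaX g b * u.1 * ((tcaX g a)⁻¹ * a.1 * tcaX g a) * u.1⁻¹ * (tcaX g b)⁻¹ := by group
        _ = tcaX g b * (u.1 * g) * u.1⁻¹ * (tcaX g b)⁻¹ := by rw [h1]; group
        _ = tcaX g b * (g * u.1) * u.1⁻¹ * (tcaX g b)⁻¹ := by rw [hu]
        _ = tcaX g b * g * (tcaX g b)⁻¹ := by group
        _ = b.1 := h2
    have hb : (⟨(tcaX g b * u.1 * (tcaX g a)⁻¹) * a.1 * (tcaX g b * u.1 * (tcaX g a)⁻¹)⁻¹,
        conj_memX g a.2 _⟩ : {a : G // IsConj g a}) = b := Subtype.ext hz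
    refine Prod.ext (Prod.ext ?_ ?_) ?_
    · exact hb
    · rfl
    · apply Subtype.ext
      simp only []
      rw [hb]
      group

variable [DecidableEq G] (g : G) [Fintype {a : G // IsConj g a}]

/-- The linear equivalence realizing matrices over the group algebra of the
centralizer as a free module on the index set. -/
private def toMatX :
    ((({a : G // IsConj g a} × {a : G // IsConj g a}) ×
        Subgroup.centralizer ({g} : Set G)) →₀ ℂ) ≃ₗ[ℂ]
      Matrix {a : G // IsConj g a} {a : G // IsConj g a}
        (MonoidAlgebra ℂ (Subgroup.centralizer ({g} : Set G))) :=
  ((Finsupp.finsuppProdLEquiv ℂ).trans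
    (Finsupp.mapRange.linearEquiv (MonoidAlgebra.coeffLinearEquiv ℂ).symm)).trans
    ((Finsupp.linearEquivFunOnFinite ℂ (MonoidAlgebra ℂ (Subgroup.centralizer ({g} : Set G)))
        ({a : G // IsConj g a} × {a : G // IsConj g a})).trans
      (LinearEquiv.curry ℂ (MonoidAlgebra ℂ (Subgroup.centralizer ({g} : Set G)))
        {a : G // IsConj g a} {a : G // IsConj g a}))

/-- The standard basis of matrices over the group algebra. -/
private def MBX : Module.Basis ((({a : G // IsConj g a} × {a : G // IsConj g a}) ×
      Subgroup.centralizer ({g} : Set G))) ℂ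
    (Matrix {a : G // IsConj g a} {a : G // IsConj g a}
      (MonoidAlgebra ℂ (Subgroup.centralizer ({g} : Set G)))) :=
  Finsupp.basisSingleOne.map (toMatX g)

private lemma MBX_apply (b a : {a : G // IsConj g a}) (u : Subgroup.centralizer ({g} : Set G)) :
    MBX g ((b, a), u) = Matrix.single b a (MonoidAlgebra.single u 1) := by
  ext i j x
  simp only [MBX, toMatX, Module.Basis.map_apply, Finsupp.coe_basisSingleOne,
    LinearEquiv.trans_apply, Matrix.single]
  erw [Finsupp.curryLinearEquiv_apply]
  simp only [Finsupp.mapRange.linearEquiv_apply, Finsupp.linearEquivFunOnFinite_apply,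
    LinearEquiv.coe_curry, Function.curry_apply, Finsupp.mapRange_apply, Finsupp.curry_apply,
    MonoidAlgebra.coeffLinearEquiv_symm_apply, Matrix.of_apply]
  erw [LinearEquiv.trans_apply, LinearEquiv.coe_curry]
  by_cases h1 : b = i <;> by_cases h2 : a = j <;> by_cases h3 : u = x <;>
    simp [h1, h2, h3, Finsupp.single_apply, LinearEquiv.trans_apply, LinearEquiv.coe_curry,
      Function.curry_apply, Finsupp.linearEquivFunOnFinite_apply, MonoidAlgebra.coeff_single, Pi.single_apply]
end TubeAux

/-- In the tube algebra `D` of `G`-Vec (basis `e_{(g,z)}`, with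
`e_{(h,w)} · e_{(g,z)} = e_{(g,wz)}` if `h = zgz⁻¹` and `0` otherwise), if the
conjugacy class `Γ` of `g` is finite, then the span `D_Γ` of
`{e_{(a,z)} : a ∈ Γ, z ∈ G}` is a subalgebra, and it is isomorphic as a
ℂ-algebra to `Γ × Γ` matrices over the group algebra of the centralizer of
`g`. -/
theorem tube_algebra_conjugacy_block {G : Type*} [Group G] [DecidableEq G]
    {D : Type*} [NonUnitalRing D] [Module ℂ D]
    [SMulCommClass ℂ D D] [IsScalarTower ℂ D D]
    (e : Module.Basis (G × G) ℂ D)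
    (hmul : ∀ h w g z : G,
      e (h, w) * e (g, z) = if h = z * g * z⁻¹ then e (g, w * z) else 0)
    (g : G) [Fintype {a : G // IsConj g a}] :
    ∃ (hclosed : ∀ x ∈ Submodule.span ℂ {x : D | ∃ a z : G, IsConj g a ∧ x = e (a, z)},
        ∀ y ∈ Submodule.span ℂ {x : D | ∃ a z : G, IsConj g a ∧ x = e (a, z)},
          x * y ∈ Submodule.span ℂ {x : D | ∃ a z : G, IsConj g a ∧ x = e (a, z)})
      (f : ↥(Submodule.span ℂ {x : D | ∃ a z : G, IsConj g a ∧ x = e (a, z)}) ≃ₗ[ℂ]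
        Matrix {a : G // IsConj g a} {a : G // IsConj g a}
          (MonoidAlgebra ℂ ↥(Subgroup.centralizer ({g} : Set G)))),
      ∀ (x y : ↥(Submodule.span ℂ {x : D | ∃ a z : G, IsConj g a ∧ x = e (a, z)})),
        f ⟨(x : D) * (y : D), hclosed x x.2 y y.2⟩ = f x * f y := by
  classical
  set s := {x : D | ∃ a z : G, IsConj g a ∧ x = e (a, z)} with hs
  -- closure under multiplication
  have hclosed : ∀ x ∈ Submodule.span ℂ s, ∀ y ∈ Submodule.span ℂ s,
      x * y ∈ Submodule.span ℂ s := by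
    intro x hx y hy
    induction hx, hy using Submodule.span_induction₂ with
    | mem_mem x y hx hy =>
      obtain ⟨a, z, ha, rfl⟩ := hx
      obtain ⟨a', z', ha', rfl⟩ := hy
      rw [hmul]
      split
      · exact Submodule.subset_span ⟨a', z * z', ha', rfl⟩
      · exact Submodule.zero_mem _
    | zero_left y hy => rw [zero_mul]; exact Submodule.zero_mem _
    | zero_right x hx => rw [mul_zero]; exact Submodule.zero_mem _
    | add_left x y z hx hy hz h1 h2 => rw [add_mul]; exact Submodule.add_mem _ h1 h2
    | add_right x y z hx hy hz h1 h2 => rw [mul_add]; exact Submodule.add_mem _ h1 h2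
    | smul_left r x y hx hy h1 => rw [smul_mul_assoc]; exact Submodule.smul_mem _ _ h1
    | smul_right r x y hx hy h1 => rw [mul_smul_comm]; exact Submodule.smul_mem _ _ h1
  -- basis of the span
  have hrange : Set.range (fun p : {p : G × G // IsConj g p.1} => e p.1) = s := by
    ext x
    constructor
    · rintro ⟨⟨⟨a, z⟩, hp⟩, rfl⟩
      exact ⟨a, z, hp, rfl⟩
    · rintro ⟨a, z, ha, rfl⟩
      exact ⟨⟨(a, z), ha⟩, rfl⟩
  have hli : LinearIndependent ℂ (fun p : {p : G × G // IsConj g p.1} => e p.1) :=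
    e.linearIndependent.comp _ Subtype.val_injective
  let B : Module.Basis {p : G × G // IsConj g p.1} ℂ ↥(Submodule.span ℂ s) :=
    (Module.Basis.span hli).map (LinearEquiv.ofEq _ _ (by rw [hrange]))
  have hB : ∀ p, (B p : D) = e p.1 := by
    intro p
    simp only [B, Module.Basis.map_apply, LinearEquiv.coe_ofEq_apply, Module.Basis.span_apply]
  -- the linear equivalence
  let f : ↥(Submodule.span ℂ s) ≃ₗ[ℂ]
      Matrix {a : G // IsConj g a} {a : G // IsConj g a}
        (MonoidAlgebra ℂ ↥(Subgroup.centralizer ({g} : Set G))) :=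
    B.equiv (MBX g) (idxEquivX g)
  refine ⟨hclosed, f, ?_⟩
  -- the multiplication map on the span, as a bilinear map
  let mulS : ↥(Submodule.span ℂ s) →ₗ[ℂ] ↥(Submodule.span ℂ s) →ₗ[ℂ] ↥(Submodule.span ℂ s) :=
    LinearMap.mk₂ ℂ (fun x y => ⟨(x : D) * (y : D), hclosed x x.2 y y.2⟩)
      (fun m₁ m₂ n => Subtype.ext (by simp [add_mul]))
      (fun c m n => Subtype.ext (by simp [smul_mul_assoc]))
      (fun m n₁ n₂ => Subtype.ext (by simp [mul_add]))
      (fun c m n => Subtype.ext (by simp [mul_smul_comm]))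
  -- multiplicativity on basis vectors
  have key : ∀ p q, f (mulS (B p) (B q)) = f (B p) * f (B q) := by
    intro p q
    obtain ⟨⟨h, w⟩, hp⟩ := p
    obtain ⟨⟨a, z⟩, hq⟩ := q
    by_cases hc : h = z * a * z⁻¹
    · subst hc
      have hBP : mulS (B ⟨(z * a * z⁻¹, w), hp⟩) (B ⟨(a, z), hq⟩) = B ⟨(a, w * z), hq⟩ := by
        apply Subtype.ext
        show (B ⟨(z * a * z⁻¹, w), hp⟩ : D) * (B ⟨(a, z), hq⟩ : D) = _
        rw [hB, hB, hB, hmul, if_pos rfl]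
      rw [hBP]
      simp only [f, Module.Basis.equiv_apply]
      simp only [idxEquivX, Equiv.coe_fn_mk, MBX_apply]
      rw [Matrix.single_mul_single_same, MonoidAlgebra.single_mul_single, one_mul]
      have hrow : w * z * a * (w * z)⁻¹ = w * (z * a * z⁻¹) * w⁻¹ := by group
      simp only [hrow]
      refine congrArg _ (congrArg (fun u => MonoidAlgebra.single u (1 : ℂ)) (Subtype.ext ?_))
      simp only [Subgroup.coe_mul]
      group
    · have hBP : mulS (B ⟨(h, w), hp⟩) (B ⟨(a, z), hq⟩) = 0 := by
        apply Subtype.ext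
        show (B ⟨(h, w), hp⟩ : D) * (B ⟨(a, z), hq⟩ : D) = (0 : D)
        rw [hB, hB, hmul, if_neg hc]
      rw [hBP, map_zero]
      simp only [f, Module.Basis.equiv_apply]
      simp only [idxEquivX, Equiv.coe_fn_mk, MBX_apply]
      rw [Matrix.single_mul_single_of_ne]
      exact fun hEq => hc (congrArg Subtype.val hEq)
  -- extend by bilinearity
  have hbil : mulS.compr₂ f.toLinearMap =
      (LinearMap.mul ℂ _).compl₁₂ f.toLinearMap f.toLinearMap := by
    refine B.ext fun p => B.ext fun q => ?_
    simp only [LinearMap.compr₂_apply, LinearMap.compl₁₂_apply, LinearMap.mul_apply',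
      LinearEquiv.coe_coe, LinearEquiv.coe_toLinearMap]
    exact key p q
  intro x y
  have hxy := DFunLike.congr_fun (DFunLike.congr_fun hbil x) y
  simpa only [LinearMap.compr₂_apply, LinearMap.compl₁₂_apply, LinearMap.mul_apply',
    LinearEquiv.coe_coe, LinearEquiv.coe_toLinearMap, mulS, LinearMap.mk₂_apply] using hxy
end
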